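/- Let d ≥ 1 be an integer, let σ_P > 0, w > 0 and b ∈ ℝ be real numbers. Let ρ be the product probability measure on ℝ^(d+1) (functions Fin (d+1) → ℝ) with i.i.d. coordinates gaussianReal 0 σ_P². Then ρ({ε : Σ_{i=1}^{d} (w + εᵢ)·1 + (b + ε_{d+1}) > 0}) = Φ((b + d·w)/(√(d+1)·σ_P)) and ρ({ε : Σ_{i=1}^{d} (w + εᵢ)·(−1) + (b + ε_{d+1}) < 0}) = Φ((d·w − b)/(√(d+1)·σ_P)). -/

import Mathlib

open MeasureTheory ProbabilityTheory Real

/-- The standard normal cumulative distribution function. -/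
noncomputable def Phi (t : ℝ) : ℝ :=
  ((gaussianReal 0 1) (Set.Iic t)).toReal

open scoped NNReal ENNReal

lemma pdf_mul_eq (v₁ v₂ : ℝ≥0) (h1 : v₁ ≠ 0) (h2 : v₂ ≠ 0) (z x : ℝ) :
    gaussianPDFReal 0 v₁ x * gaussianPDFReal x v₂ z =
      ((√(2 * π * v₁))⁻¹ * (√(2 * π * v₂))⁻¹ * rexp (- z^2 / (2 * (v₁ + v₂)))) *
        rexp (-(((v₁:ℝ) + v₂) / (2 * v₁ * v₂)) * (x - (v₁:ℝ) * z / (v₁ + v₂))^2) := by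
  have ha : (0:ℝ) < v₁ := lt_of_le_of_ne v₁.coe_nonneg (by exact_mod_cast (Ne.symm h1))
  have hb : (0:ℝ) < v₂ := lt_of_le_of_ne v₂.coe_nonneg (by exact_mod_cast (Ne.symm h2))
  simp only [gaussianPDFReal, sub_zero]
  rw [mul_mul_mul_comm, ← Real.exp_add,
    mul_assoc ((√(2 * π * (v₁:ℝ)))⁻¹ * (√(2 * π * (v₂:ℝ)))⁻¹), ← Real.exp_add]
  congr 1
  congr 1
  field_simp
  ring

lemma integral_pdf_mul (v₁ v₂ : ℝ≥0) (h1 : v₁ ≠ 0) (h2 : v₂ ≠ 0) (z : ℝ) :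
    ∫ x, gaussianPDFReal 0 v₁ x * gaussianPDFReal x v₂ z
      = gaussianPDFReal 0 (v₁ + v₂) z := by
  have ha : (0:ℝ) < v₁ := lt_of_le_of_ne v₁.coe_nonneg (by exact_mod_cast (Ne.symm h1))
  have hb : (0:ℝ) < v₂ := lt_of_le_of_ne v₂.coe_nonneg (by exact_mod_cast (Ne.symm h2))
  have hab : (0:ℝ) < (v₁:ℝ) + v₂ := by linarith
  set A : ℝ := ((v₁:ℝ) + v₂) / (2 * v₁ * v₂) with hA
  have hApos : 0 < A := by positivity
  set m : ℝ := (v₁:ℝ) * z / (v₁ + v₂) with hm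
  set K : ℝ := (√(2 * π * v₁))⁻¹ * (√(2 * π * v₂))⁻¹ * rexp (- z^2 / (2 * ((v₁:ℝ) + v₂)))
    with hK
  have h1' : ∫ x, gaussianPDFReal 0 v₁ x * gaussianPDFReal x v₂ z
      = ∫ x, K * rexp (-A * (x - m)^2) := by
    refine integral_congr_ae (Filter.Eventually.of_forall fun x => ?_)
    exact pdf_mul_eq v₁ v₂ h1 h2 z x
  rw [h1', integral_const_mul]
  have h2' : ∫ x, rexp (-A * (x - m)^2) = √(π / A) := by
    rw [integral_sub_right_eq_self (fun x => rexp (-A * x^2)) m, integral_gaussian]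
  rw [h2', gaussianPDFReal]
  push_cast
  rw [hK, sub_zero]
  rw [mul_comm _ (√(π / A)), ← mul_assoc]
  congr 1
  rw [← Real.sqrt_inv, ← Real.sqrt_inv, ← Real.sqrt_mul (by positivity),
    ← Real.sqrt_mul (by positivity), ← Real.sqrt_inv]
  congr 1
  rw [hA]
  field_simp

lemma gauss_conv (v₁ v₂ : ℝ≥0) :
    Measure.map (fun p : ℝ × ℝ => p.1 + p.2) ((gaussianReal 0 v₁).prod (gaussianReal 0 v₂))
      = gaussianReal 0 (v₁ + v₂) := by
  by_cases h1 : v₁ = 0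
  · subst h1
    rw [gaussianReal_zero_var, Measure.dirac_prod,
      Measure.map_map (by fun_prop) (by fun_prop)]
    simp [Function.comp_def]
  by_cases h2 : v₂ = 0
  · subst h2
    rw [gaussianReal_zero_var, Measure.prod_dirac,
      Measure.map_map (by fun_prop) (by fun_prop)]
    simp [Function.comp_def]
  have h12 : v₁ + v₂ ≠ 0 := by positivity
  ext s hs
  rw [Measure.map_apply (by fun_prop) hs, gaussianReal_apply _ h12]
  have hpre : (fun p : ℝ × ℝ => p.1 + p.2) ⁻¹' s = {p : ℝ × ℝ | p.1 + p.2 ∈ s} := rfl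
  rw [hpre, Measure.prod_apply (by exact measurable_add hs)]
  have step1 : ∀ x : ℝ, (gaussianReal 0 v₂) (Prod.mk x ⁻¹' {p : ℝ × ℝ | p.1 + p.2 ∈ s})
      = ∫⁻ z in s, gaussianPDF x v₂ z := by
    intro x
    have : Prod.mk x ⁻¹' {p : ℝ × ℝ | p.1 + p.2 ∈ s} = (fun y => x + y) ⁻¹' s := rfl
    rw [this, ← Measure.map_apply (by fun_prop) hs, gaussianReal_map_const_add,
      zero_add, gaussianReal_apply _ h2]
  simp_rw [step1]
  have hjoint : Measurable fun p : ℝ × ℝ => gaussianPDF p.1 v₂ p.2 := by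
    simp only [gaussianPDF, gaussianPDFReal]
    fun_prop
  have hmeas : Measurable fun x : ℝ => ∫⁻ z in s, gaussianPDF x v₂ z :=
    Measurable.lintegral_prod_right (f := fun x z => gaussianPDF x v₂ z) hjoint
  rw [gaussianReal_of_var_ne_zero _ h1,
    lintegral_withDensity_eq_lintegral_mul _ (measurable_gaussianPDF _ _) hmeas]
  simp only [Pi.mul_apply]
  have step2 : ∀ x : ℝ, gaussianPDF 0 v₁ x * ∫⁻ z in s, gaussianPDF x v₂ z
      = ∫⁻ z in s, gaussianPDF 0 v₁ x * gaussianPDF x v₂ z := fun x =>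
    (lintegral_const_mul _ (measurable_gaussianPDF x v₂)).symm
  simp_rw [step2]
  rw [lintegral_lintegral_swap (by exact ((measurable_gaussianPDF 0 v₁).comp measurable_fst |>.mul hjoint).aemeasurable)]
  refine setLIntegral_congr_fun hs (fun z _ => ?_)
  have key : ∀ x : ℝ, gaussianPDF 0 v₁ x * gaussianPDF x v₂ z
      = ENNReal.ofReal (gaussianPDFReal 0 v₁ x * gaussianPDFReal x v₂ z) := fun x =>
    (ENNReal.ofReal_mul (gaussianPDFReal_nonneg _ _ _)).symm
  simp_rw [key]
  have ha : (0:ℝ) < v₁ := lt_of_le_of_ne v₁.coe_nonneg (by exact_mod_cast (Ne.symm h1))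
  have hb : (0:ℝ) < v₂ := lt_of_le_of_ne v₂.coe_nonneg (by exact_mod_cast (Ne.symm h2))
  have hApos : (0:ℝ) < ((v₁:ℝ) + v₂) / (2 * v₁ * v₂) := by positivity
  have hint : Integrable (fun x => gaussianPDFReal 0 v₁ x * gaussianPDFReal x v₂ z) := by
    have := ((integrable_exp_neg_mul_sq hApos).comp_sub_right
      ((v₁:ℝ) * z / (v₁ + v₂))).const_mul
      ((√(2 * π * (v₁:ℝ)))⁻¹ * (√(2 * π * (v₂:ℝ)))⁻¹ * rexp (- z^2 / (2 * ((v₁:ℝ) + v₂))))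
    refine this.congr (Filter.Eventually.of_forall fun x => ?_)
    exact (pdf_mul_eq v₁ v₂ h1 h2 z x).symm
  rw [← ofReal_integral_eq_lintegral_ofReal hint
    (Filter.Eventually.of_forall fun x =>
      mul_nonneg (gaussianPDFReal_nonneg _ _ _) (gaussianPDFReal_nonneg _ _ _)),
    integral_pdf_mul v₁ v₂ h1 h2 z]
  rfl

lemma pi_signed_sum (v : ℝ≥0) : ∀ (n : ℕ) (c : Fin n → ℝ), (∀ i, c i = 1 ∨ c i = -1) →
    (Measure.pi fun _ : Fin n => gaussianReal 0 v).map (fun ε => ∑ i, c i * ε i)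
      = gaussianReal 0 (n • v) := by
  intro n
  induction n with
  | zero =>
      intro c hc
      simp only [Finset.univ_eq_empty, Finset.sum_empty, zero_smul, gaussianReal_zero_var]
      rw [Measure.map_const, measure_univ, one_smul]
  | succ n ih =>
      intro c hc
      set e := MeasurableEquiv.piFinSuccAbove (fun _ : Fin (n+1) => ℝ) 0 with he
      have hmp := measurePreserving_piFinSuccAbove (fun _ : Fin (n+1) => gaussianReal 0 v) 0
      set g := fun p : ℝ × (Fin n → ℝ) => c 0 * p.1 + ∑ j : Fin n, c (Fin.succ j) * p.2 j
        with hg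
      have hgm : Measurable g := by
        apply Measurable.add
        · fun_prop
        · exact Finset.measurable_sum _ fun j _ => by fun_prop
      have hfg : (fun ε : Fin (n+1) → ℝ => ∑ i, c i * ε i) = g ∘ e := by
        funext ε
        simp only [Function.comp_apply, hg, he, MeasurableEquiv.piFinSuccAbove,
          MeasurableEquiv.coe_mk, MeasurableEquiv.piFinSuccAbove_apply, Fin.removeNth]
        rw [Fin.sum_univ_succ]
        simp [Fin.zero_succAbove, Fin.tail]
      rw [hfg, ← Measure.map_map hgm e.measurable, hmp.map_eq]
      have hg2 : g = (fun p : ℝ × ℝ => p.1 + p.2) ∘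
          (Prod.map (fun x : ℝ => c 0 * x) (fun ε : Fin n → ℝ => ∑ j, c (Fin.succ j) * ε j)) :=
        rfl
      rw [hg2, ← Measure.map_map (by fun_prop)
        ((measurable_const_mul _).prodMap (Finset.measurable_sum _ fun j _ => by fun_prop)),
        ← Measure.map_prod_map _ _ (by fun_prop) (Finset.measurable_sum _ fun j _ => by fun_prop)]
      have hc0 : NNReal.mk ((c 0)^2) (sq_nonneg _) = 1 := by
        rcases hc 0 with h | h <;> · rw [NNReal.eq_iff]; simp [h]
      rw [gaussianReal_map_const_mul, hc0, one_mul, mul_zero,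
        ih (fun j => c (Fin.succ j)) (fun j => hc _), gauss_conv]
      rw [succ_nsmul, add_comm]

lemma gauss_Iic (V : ℝ≥0) (hV : V ≠ 0) (s : ℝ) :
    ((gaussianReal 0 V) (Set.Iic s)).toReal = Phi (s / Real.sqrt V) := by
  have hVpos : (0:ℝ) < V := lt_of_le_of_ne V.coe_nonneg (by exact_mod_cast (Ne.symm hV))
  set c : ℝ := (Real.sqrt V)⁻¹ with hcdef
  have hc : 0 < c := by positivity
  have hc2 : (NNReal.mk (c^2) (sq_nonneg c) * V : ℝ≥0) = 1 := by
    rw [NNReal.eq_iff]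
    push_cast
    rw [hcdef]
    rw [inv_pow, Real.sq_sqrt V.coe_nonneg]
    field_simp
  have hmap := gaussianReal_map_const_mul (μ := 0) (v := V) c
  rw [mul_zero, hc2] at hmap
  have hpre : (fun x : ℝ => c * x) ⁻¹' Set.Iic (c * s) = Set.Iic s := by
    ext x
    simp [mul_le_mul_iff_right₀ hc]
  have : (gaussianReal 0 1) (Set.Iic (c * s))
      = (gaussianReal 0 V) (Set.Iic s) := by
    rw [← hmap, Measure.map_apply (by fun_prop) measurableSet_Iic, hpre]
  rw [← this, Phi]
  congr 1
  rw [hcdef]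
  ring

lemma gauss_point (V : ℝ≥0) (hV : V ≠ 0) (s : ℝ) : (gaussianReal 0 V) {s} = 0 :=
  gaussianReal_absolutelyContinuous 0 hV (by simp)

lemma phi_neg (a : ℝ) : Phi (-a) = 1 - Phi a := by
  have hmap := gaussianReal_map_const_mul (μ := 0) (v := 1) (-1 : ℝ)
  have h1 : NNReal.mk ((-1:ℝ)^2) (sq_nonneg _) * 1 = 1 := by
    rw [NNReal.eq_iff]; norm_num
  rw [mul_zero, h1] at hmap
  have hpre : (fun x : ℝ => (-1 : ℝ) * x) ⁻¹' Set.Iic (-a) = Set.Ici a := by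
    ext x; simp
  have hIci : (gaussianReal 0 1) (Set.Iic (-a)) = (gaussianReal 0 1) (Set.Ici a) := by
    nth_rewrite 1 [← hmap]
    rw [Measure.map_apply (by fun_prop) measurableSet_Iic, hpre]
  have hIoi : (gaussianReal 0 1) (Set.Ici a) = (gaussianReal 0 1) (Set.Ioi a) := by
    refine le_antisymm ?_ (measure_mono Set.Ioi_subset_Ici_self)
    calc (gaussianReal 0 1) (Set.Ici a) ≤ (gaussianReal 0 1) (Set.Ioi a ∪ {a}) := by
          refine measure_mono fun x hx => ?_
          rcases eq_or_lt_of_le (Set.mem_Ici.mp hx) with h | h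
          · exact Or.inr (by simp [h.symm])
          · exact Or.inl h
      _ ≤ (gaussianReal 0 1) (Set.Ioi a) + (gaussianReal 0 1) {a} := measure_union_le _ _
      _ = (gaussianReal 0 1) (Set.Ioi a) := by rw [gauss_point 1 one_ne_zero, add_zero]
  have hcompl : (gaussianReal 0 1) (Set.Ioi a) = 1 - (gaussianReal 0 1) (Set.Iic a) := by
    rw [← Set.compl_Iic, measure_compl measurableSet_Iic (measure_ne_top _ _), measure_univ]
  rw [Phi, hIci, hIoi, hcompl, Phi, ENNReal.toReal_sub_of_le prob_le_one (by simp)]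
  simp

lemma gauss_Ioi (V : ℝ≥0) (hV : V ≠ 0) (s : ℝ) :
    ((gaussianReal 0 V) (Set.Ioi s)).toReal = Phi (-s / Real.sqrt V) := by
  have hcompl : (gaussianReal 0 V) (Set.Ioi s) = 1 - (gaussianReal 0 V) (Set.Iic s) := by
    rw [← Set.compl_Iic, measure_compl measurableSet_Iic (measure_ne_top _ _), measure_univ]
  rw [hcompl, ENNReal.toReal_sub_of_le prob_le_one (by simp), ENNReal.toReal_one,
    gauss_Iic V hV s, neg_div, phi_neg]

lemma gauss_Iio (V : ℝ≥0) (hV : V ≠ 0) (s : ℝ) :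
    ((gaussianReal 0 V) (Set.Iio s)).toReal = Phi (s / Real.sqrt V) := by
  rw [← gauss_Iic V hV s]
  congr 1
  refine le_antisymm (measure_mono Set.Iio_subset_Iic_self) ?_
  calc (gaussianReal 0 V) (Set.Iic s) ≤ (gaussianReal 0 V) (Set.Iio s ∪ {s}) := by
        refine measure_mono fun x hx => ?_
        rcases lt_or_eq_of_le (Set.mem_Iic.mp hx) with h | h
        · exact Or.inl h
        · exact Or.inr (by simp [h])
    _ ≤ (gaussianReal 0 V) (Set.Iio s) + (gaussianReal 0 V) {s} := measure_union_le _ _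
    _ = (gaussianReal 0 V) (Set.Iio s) := by rw [gauss_point V hV, add_zero]

/-- Parameter smoothness formulas: probabilities that the linear classifier, with i.i.d.
Gaussian noise added to each of the d weights and the bias, correctly classifies the two
class centers. -/
theorem parameter_smoothness_formulas
    (d : ℕ) (hd : 1 ≤ d)
    (σP w b : ℝ) (hσP : 0 < σP) (hw : 0 < w) :
    ((Measure.pi fun _ : Fin (d + 1) => gaussianReal 0 ⟨σP ^ 2, sq_nonneg σP⟩)
        {ε : Fin (d + 1) → ℝ |
          (∑ i : Fin d, (w + ε (Fin.castSucc i)) * 1) + (b + ε (Fin.last d)) > 0}).toReal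
      = Phi ((b + d * w) / (Real.sqrt (d + 1) * σP))
    ∧ ((Measure.pi fun _ : Fin (d + 1) => gaussianReal 0 ⟨σP ^ 2, sq_nonneg σP⟩)
        {ε : Fin (d + 1) → ℝ |
          (∑ i : Fin d, (w + ε (Fin.castSucc i)) * (-1)) + (b + ε (Fin.last d)) < 0}).toReal
      = Phi ((d * w - b) / (Real.sqrt (d + 1) * σP)) := by
  set v : ℝ≥0 := ⟨σP ^ 2, sq_nonneg σP⟩ with hv
  set V : ℝ≥0 := (d + 1) • v with hV
  have hVne : V ≠ 0 := by
    have hvc : (v:ℝ) = σP^2 := rfl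
    rw [hV]
    intro h
    rw [NNReal.eq_iff] at h
    push_cast [nsmul_eq_mul, hvc] at h
    nlinarith
  have hsqrtV : Real.sqrt V = Real.sqrt (d + 1) * σP := by
    have hvc : (v:ℝ) = σP^2 := rfl
    rw [hV]
    push_cast [nsmul_eq_mul, hvc]
    rw [Real.sqrt_mul (by positivity), Real.sqrt_sq hσP.le]
  set μ := Measure.pi fun _ : Fin (d + 1) => gaussianReal 0 v with hμ
  constructor
  · have hset : {ε : Fin (d + 1) → ℝ |
        (∑ i : Fin d, (w + ε (Fin.castSucc i)) * 1) + (b + ε (Fin.last d)) > 0}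
        = (fun ε : Fin (d + 1) → ℝ => ∑ i, (1:ℝ) * ε i) ⁻¹' Set.Ioi (-(b + d * w)) := by
      ext ε
      simp only [Set.mem_setOf_eq, Set.mem_preimage, Set.mem_Ioi, mul_one, one_mul,
        Fin.sum_univ_castSucc (f := fun i => ε i), Finset.sum_add_distrib,
        Finset.sum_const, Finset.card_univ, Fintype.card_fin, nsmul_eq_mul]
      constructor <;> intro h <;> linarith
    rw [hset, ← Measure.map_apply (by exact Finset.measurable_sum _ fun j _ => by fun_prop)
      measurableSet_Ioi,
      pi_signed_sum v (d+1) (fun _ => 1) (fun _ => Or.inl rfl), ← hV,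
      gauss_Ioi V hVne, hsqrtV, neg_neg]
  · set c : Fin (d + 1) → ℝ := fun i => if i = Fin.last d then 1 else -1 with hc
    have hset : {ε : Fin (d + 1) → ℝ |
        (∑ i : Fin d, (w + ε (Fin.castSucc i)) * (-1)) + (b + ε (Fin.last d)) < 0}
        = (fun ε : Fin (d + 1) → ℝ => ∑ i, c i * ε i) ⁻¹' Set.Iio (d * w - b) := by
      ext ε
      have hsum : ∑ i, c i * ε i
          = (∑ i : Fin d, -(ε (Fin.castSucc i))) + ε (Fin.last d) := by
        rw [Fin.sum_univ_castSucc (f := fun i => c i * ε i)]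
        congr 1
        · refine Finset.sum_congr rfl fun i _ => ?_
          rw [hc]
          simp [(Fin.castSucc_lt_last i).ne]
        · simp [hc]
      simp only [Set.mem_setOf_eq, Set.mem_preimage, Set.mem_Iio, hsum, mul_neg_one,
        Finset.sum_add_distrib, Finset.sum_neg_distrib, Finset.sum_const, Finset.card_univ,
        Fintype.card_fin, nsmul_eq_mul]
      constructor <;> intro h <;> linarith
    have hcpm : ∀ i, c i = 1 ∨ c i = -1 := by
      intro i
      rw [hc]
      by_cases h : i = Fin.last d <;> simp [h]
    rw [hset, ← Measure.map_apply (by exact Finset.measurable_sum _ fun j _ => by fun_prop)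
      measurableSet_Iio,
      pi_signed_sum v (d+1) c hcpm, ← hV, gauss_Iio V hVne, hsqrtV]
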